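/- arXiv:2502.12978 — 3 statements merged into one kernel-verified Lean document; each statement's English description precedes it below -/
import Mathlib

section
/- Let Z be a real-valued random variable on a probability space whose law is atomless (has no atoms), and let S be a measurable subset of ℝ with P(Z ∈ S) > 0. Define the conditional survival p-value p(t) := P(Z ≥ t and Z ∈ S) / P(Z ∈ S). Then for every α ∈ (0, 1), P(p(Z) ≤ α and Z ∈ S) = α · P(Z ∈ S); equivalently, conditional on the event {Z ∈ S}, the random variable p(Z) is uniformly distributed on (0, 1). -/
open MeasureTheory Set Filter Topology
open scoped ENNReal

/-- Conditional probability integral transform: if the law of `Z` is atomless and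
`S` is a measurable set with `P(Z ∈ S) > 0`, then the conditional survival p-value
`p(t) = P(Z ≥ t ∧ Z ∈ S)/P(Z ∈ S)` satisfies
`P(p(Z) ≤ α ∧ Z ∈ S) = α · P(Z ∈ S)` for all `α ∈ (0,1)`. -/
theorem stmt_0 {Ω : Type*} [MeasurableSpace Ω] (P : Measure Ω) [IsProbabilityMeasure P]
    (Z : Ω → ℝ) (hZ : Measurable Z) (hatom : ∀ x : ℝ, P.map Z {x} = 0)
    (S : Set ℝ) (hS : MeasurableSet S) (hpos : 0 < P {ω | Z ω ∈ S})
    (p : ℝ → ℝ)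
    (hp : ∀ t : ℝ, p t = (P {ω | t ≤ Z ω ∧ Z ω ∈ S}).toReal / (P {ω | Z ω ∈ S}).toReal)
    (α : ℝ) (hα : α ∈ Set.Ioo (0 : ℝ) 1) :
    P {ω | p (Z ω) ≤ α ∧ Z ω ∈ S} = ENNReal.ofReal α * P {ω | Z ω ∈ S} := by
  obtain ⟨hα0, hα1⟩ := hα
  set μ := P.map Z with hμ
  haveI : IsProbabilityMeasure μ := Measure.isProbabilityMeasure_map hZ.aemeasurable
  have hmap : ∀ (A : Set ℝ), MeasurableSet A → μ A = P {ω | Z ω ∈ A} := by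
    intro A hA; rw [hμ, Measure.map_apply hZ hA]; rfl
  have hcS : μ S = P {ω | Z ω ∈ S} := hmap S hS
  set c := μ S with hc
  have hc0 : 0 < c := by rw [hcS]; exact hpos
  have hcfin : c ≠ ⊤ := measure_ne_top μ S
  set F : ℝ → ℝ≥0∞ := fun t => μ (Ici t ∩ S) with hFdef
  have hFmeas : ∀ t : ℝ, MeasurableSet (Ici t ∩ S) := fun t => measurableSet_Ici.inter hS
  have hFP : ∀ t : ℝ, F t = P {ω | t ≤ Z ω ∧ Z ω ∈ S} := by
    intro t
    show μ (Ici t ∩ S) = _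
    rw [hmap _ (hFmeas t)]
    rfl
  have hFanti : ∀ {s t : ℝ}, s ≤ t → F t ≤ F s := by
    intro s t h
    exact measure_mono (inter_subset_inter_left S (Ici_subset_Ici.2 h))
  have hFfin : ∀ t, F t ≠ ⊤ := fun t => measure_ne_top μ _
  set β : ℝ≥0∞ := ENNReal.ofReal α * c with hβdef
  have hβfin : β ≠ ⊤ := ENNReal.mul_ne_top ENNReal.ofReal_ne_top hcfin
  have hβpos : 0 < β :=
    ENNReal.mul_pos (ENNReal.ofReal_pos.2 hα0).ne' hc0.ne'
  have hβlt : β < c := by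
    calc β = ENNReal.ofReal α * c := rfl
    _ < 1 * c := by
        rw [mul_comm _ c, mul_comm 1 c]; apply ENNReal.mul_lt_mul_right hc0.ne' hcfin
        exact ENNReal.ofReal_lt_one.2 hα1
    _ = c := one_mul c
  have hβtoReal : β.toReal = α * c.toReal := by
    rw [hβdef, ENNReal.toReal_mul, ENNReal.toReal_ofReal hα0.le]
  -- p t ≤ α ↔ F t ≤ β
  have hctr : 0 < c.toReal := ENNReal.toReal_pos hc0.ne' hcfin
  have hpiff : ∀ t : ℝ, p t ≤ α ↔ F t ≤ β := by
    intro t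
    rw [hp t, ← hcS, ← hFP t, div_le_iff₀ hctr, ← hβtoReal,
      ENNReal.toReal_le_toReal (hFfin t) hβfin]
  -- F tends to 0 along ℕ → ∞
  have h_inter0 : (⋂ n : ℕ, Ici (n : ℝ) ∩ S) = ∅ := by
    ext x
    simp only [mem_iInter, mem_empty_iff_false, iff_false, not_forall]
    obtain ⟨n, hn⟩ := exists_nat_gt x
    exact ⟨n, fun h => absurd h.1 (not_le.2 hn)⟩
  have htend0 : Tendsto (fun n : ℕ => F (n : ℝ)) atTop (𝓝 0) := by
    have h := tendsto_measure_iInter_atTop (μ := μ)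
      (s := fun n : ℕ => Ici (n : ℝ) ∩ S)
      (fun n => (hFmeas _).nullMeasurableSet)
      (fun n m h => inter_subset_inter_left S (Ici_subset_Ici.2 (Nat.cast_le.2 h)))
      ⟨0, measure_ne_top _ _⟩
    rwa [h_inter0, measure_empty] at h
  obtain ⟨t₀, ht₀⟩ : ∃ t : ℝ, F t ≤ β := by
    have := (htend0.eventually (ge_mem_nhds hβpos)).exists
    obtain ⟨n, hn⟩ := this
    exact ⟨(n : ℝ), hn⟩
  -- F tends to c along -n
  have h_unionS : (⋃ n : ℕ, Ici (-(n : ℝ)) ∩ S) = S := by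
    ext x
    simp only [mem_iUnion, mem_inter_iff, mem_Ici]
    constructor
    · rintro ⟨n, _, h⟩; exact h
    · intro hx
      obtain ⟨n, hn⟩ := exists_nat_gt (-x)
      exact ⟨n, by linarith, hx⟩
  have htendc : Tendsto (fun n : ℕ => F (-(n : ℝ))) atTop (𝓝 c) := by
    have h := tendsto_measure_iUnion_atTop (μ := μ)
      (s := fun n : ℕ => Ici (-(n : ℝ)) ∩ S)
      (fun n m h => inter_subset_inter_left S
        (Ici_subset_Ici.2 (neg_le_neg (Nat.cast_le.2 h))))
    rwa [h_unionS] at h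
  obtain ⟨n₁, hn₁⟩ : ∃ n : ℕ, β < F (-(n : ℝ)) :=
    ((tendsto_order.1 htendc).1 β hβlt).exists
  -- the sub-level set of F
  set A : Set ℝ := {t | F t ≤ β} with hAdef
  have hAne : A.Nonempty := ⟨t₀, ht₀⟩
  have hAbdd : BddBelow A := by
    refine ⟨-(n₁ : ℝ), fun s hs => ?_⟩
    by_contra hlt
    push_neg at hlt
    exact absurd (le_trans (hFanti hlt.le) hs) (not_le.2 hn₁)
  set ts : ℝ := sInf A with hts
  -- F ts ≥ β
  have hge : β ≤ F ts := by
    have hseq : (⋂ n : ℕ, Ici (ts - 1 / (n + 1)) ∩ S) = Ici ts ∩ S := by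
      ext x
      simp only [mem_iInter, mem_inter_iff, mem_Ici]
      constructor
      · intro h
        refine ⟨?_, (h 0).2⟩
        by_contra hx
        push_neg at hx
        obtain ⟨n, hn⟩ := exists_nat_one_div_lt (sub_pos.2 hx)
        have := (h n).1
        have h1 : (1 : ℝ) / (n + 1) < ts - x := hn
        linarith
      · intro h n
        have h1 : (0 : ℝ) < 1 / (n + 1) := by positivity
        exact ⟨le_trans (by linarith) h.1, h.2⟩
    have h := tendsto_measure_iInter_atTop (μ := μ)
      (s := fun n : ℕ => Ici (ts - 1 / (n + 1)) ∩ S)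
      (fun n => (hFmeas _).nullMeasurableSet)
      (fun n m hnm => inter_subset_inter_left S (Ici_subset_Ici.2 (by
        have hnm' : (n : ℝ) ≤ m := Nat.cast_le.2 hnm
        have : (1 : ℝ) / (m + 1) ≤ 1 / (n + 1) :=
          one_div_le_one_div_of_le (by positivity) (by linarith)
        linarith)))
      ⟨0, measure_ne_top _ _⟩
    rw [hseq] at h
    refine ge_of_tendsto h (Eventually.of_forall fun n => ?_)
    have hnot : ts - 1 / (n + 1) ∉ A := fun hmem =>
      absurd (csInf_le hAbdd hmem) (not_le.2 (by
        have : (0 : ℝ) < 1 / (n + 1) := by positivity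
        linarith))
    exact le_of_not_ge hnot
  -- F ts ≤ β
  have hle : F ts ≤ β := by
    have hIci_null : μ (Ici ts ∩ S) = μ (Ioi ts ∩ S) := by
      apply le_antisymm
      · have hsub : Ici ts ∩ S ⊆ (Ioi ts ∩ S) ∪ {ts} := by
          rintro x ⟨hx1, hx2⟩
          rcases eq_or_lt_of_le (show ts ≤ x from hx1) with h | h
          · exact Or.inr (by simp [← h])
          · exact Or.inl ⟨h, hx2⟩
        calc μ (Ici ts ∩ S) ≤ μ ((Ioi ts ∩ S) ∪ {ts}) := measure_mono hsub
          _ ≤ μ (Ioi ts ∩ S) + μ {ts} := measure_union_le _ _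
          _ = μ (Ioi ts ∩ S) := by rw [hatom ts, add_zero]
      · exact measure_mono (inter_subset_inter_left S Ioi_subset_Ici_self)
    have hseq : (⋃ n : ℕ, Ici (ts + 1 / (n + 1)) ∩ S) = Ioi ts ∩ S := by
      ext x
      simp only [mem_iUnion, mem_inter_iff, mem_Ici, mem_Ioi]
      constructor
      · rintro ⟨n, h1, h2⟩
        have : (0 : ℝ) < 1 / (n + 1) := by positivity
        exact ⟨by linarith, h2⟩
      · rintro ⟨h1, h2⟩
        obtain ⟨n, hn⟩ := exists_nat_one_div_lt (sub_pos.2 h1)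
        exact ⟨n, by linarith [hn], h2⟩
    have h := tendsto_measure_iUnion_atTop (μ := μ)
      (s := fun n : ℕ => Ici (ts + 1 / (n + 1)) ∩ S)
      (fun n m hnm => inter_subset_inter_left S (Ici_subset_Ici.2 (by
        have hnm' : (n : ℝ) ≤ m := Nat.cast_le.2 hnm
        have : (1 : ℝ) / (m + 1) ≤ 1 / (n + 1) :=
          one_div_le_one_div_of_le (by positivity) (by linarith)
        linarith)))
    rw [hseq] at h
    rw [hFdef]
    simp only
    rw [hIci_null]
    refine le_of_tendsto h (Eventually.of_forall fun n => ?_)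
    have hmem : F (ts + 1 / (n + 1)) ≤ β := by
      have h1 : (0 : ℝ) < 1 / (n + 1) := by positivity
      obtain ⟨a, haA, ha⟩ := exists_lt_of_csInf_lt hAne (show ts < ts + 1 / (n + 1) by linarith)
      exact le_trans (hFanti ha.le) haA
    exact hmem
  have hFts : F ts = β := le_antisymm hle hge
  -- identify the event
  have hsets : {ω | p (Z ω) ≤ α ∧ Z ω ∈ S} = {ω | Z ω ∈ Ici ts ∩ S} := by
    ext ω
    simp only [mem_setOf_eq, mem_inter_iff, mem_Ici]
    constructor
    · rintro ⟨h1, h2⟩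
      exact ⟨csInf_le hAbdd ((hpiff _).1 h1), h2⟩
    · rintro ⟨h1, h2⟩
      exact ⟨(hpiff _).2 (le_trans (hFanti h1) hle), h2⟩
  rw [hsets, ← hmap _ (hFmeas ts), ← hcS]
  exact hFts
end

section
/- Let Z be a real-valued random variable with law the Gaussian measure N(m, v) on ℝ, where v > 0, and let 𝒵 ⊆ ℝ be a measurable set with P(Z ∈ 𝒵) > 0. Define the selective p-value p(t) := P(Z ≥ t and Z ∈ 𝒵) / P(Z ∈ 𝒵). Then for every α ∈ (0, 1), P(p(Z) ≤ α and Z ∈ 𝒵) = α · P(Z ∈ 𝒵), i.e., P(p(Z) ≤ α | Z ∈ 𝒵) = α. -/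
open MeasureTheory ProbabilityTheory Filter Topology
open scoped NNReal ENNReal

/-- Selective p-value validity for a Gaussian test statistic truncated to a selection
event `𝒵`: if `Z ~ N(m, v)` with `v > 0` and `P(Z ∈ 𝒵) > 0`, then the selective
p-value `p(t) = P(Z ≥ t ∧ Z ∈ 𝒵)/P(Z ∈ 𝒵)` satisfies
`P(p(Z) ≤ α ∧ Z ∈ 𝒵) = α · P(Z ∈ 𝒵)` for all `α ∈ (0,1)`. -/
theorem stmt_1 {Ω : Type*} [MeasurableSpace Ω] (P : Measure Ω) [IsProbabilityMeasure P]
    (Z : Ω → ℝ) (hZ : Measurable Z) (m : ℝ) (v : ℝ≥0) (hv : 0 < v)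
    (hlaw : P.map Z = gaussianReal m v)
    (𝒵 : Set ℝ) (h𝒵 : MeasurableSet 𝒵) (hpos : 0 < P {ω | Z ω ∈ 𝒵})
    (p : ℝ → ℝ)
    (hp : ∀ t : ℝ, p t = (P {ω | t ≤ Z ω ∧ Z ω ∈ 𝒵}).toReal / (P {ω | Z ω ∈ 𝒵}).toReal)
    (α : ℝ) (hα : α ∈ Set.Ioo (0 : ℝ) 1) :
    P {ω | p (Z ω) ≤ α ∧ Z ω ∈ 𝒵} = ENNReal.ofReal α * P {ω | Z ω ∈ 𝒵} := by
  obtain ⟨hα0, hα1⟩ := hα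
  set μ := gaussianReal m v with hμdef
  have hac : μ ≪ (volume : Measure ℝ) := gaussianReal_absolutelyContinuous m hv.ne'
  have hatom : ∀ x : ℝ, μ {x} = 0 := fun x => hac (measure_singleton x)
  have hmapIci : ∀ t : ℝ, P {ω | t ≤ Z ω ∧ Z ω ∈ 𝒵} = μ (Set.Ici t ∩ 𝒵) := by
    intro t
    rw [← hlaw, Measure.map_apply hZ (measurableSet_Ici.inter h𝒵)]
    rfl
  have hmapZ : P {ω | Z ω ∈ 𝒵} = μ 𝒵 := by
    rw [← hlaw, Measure.map_apply hZ h𝒵]; rfl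
  have hfin : ∀ s : Set ℝ, μ s ≠ ∞ := fun s => measure_ne_top μ s
  set c : ℝ := (μ 𝒵).toReal with hc
  have hcpos : 0 < c := ENNReal.toReal_pos (by rw [← hmapZ]; exact hpos.ne') (hfin 𝒵)
  set F : ℝ → ℝ := fun t => (μ (Set.Ici t ∩ 𝒵)).toReal with hF
  have hanti : Antitone F := by
    intro a b hab
    exact ENNReal.toReal_mono (hfin _)
      (measure_mono (Set.inter_subset_inter_left _ (Set.Ici_subset_Ici.mpr hab)))
  have hαc_pos : 0 < α * c := mul_pos hα0 hcpos
  have hαc_lt : α * c < c := by nlinarith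
  -- p t ≤ α ↔ F t ≤ α * c
  have hpiff : ∀ t : ℝ, (p t ≤ α ↔ F t ≤ α * c) := by
    intro t
    rw [hp t, hmapIci t, hmapZ]
    exact div_le_iff₀ hcpos
  set S : Set ℝ := {t | F t ≤ α * c} with hS
  -- S is nonempty : F tends to 0 at +∞
  have hSne : S.Nonempty := by
    have htend : Tendsto (fun n : ℕ => μ (Set.Ici (n : ℝ) ∩ 𝒵)) atTop (𝓝 0) := by
      have h0 : (⋂ n : ℕ, Set.Ici (n : ℝ) ∩ 𝒵) = ∅ := by
        ext x
        simp only [Set.mem_iInter, Set.mem_inter_iff, Set.mem_Ici, Set.mem_empty_iff_false,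
          iff_false, not_forall]
        obtain ⟨n, hn⟩ := exists_nat_gt x
        exact ⟨n, fun h => absurd h.1 (not_le.mpr hn)⟩
      have := tendsto_measure_iInter_atTop (μ := μ)
        (fun n : ℕ => (measurableSet_Ici.inter h𝒵).nullMeasurableSet)
        (fun a b hab => Set.inter_subset_inter_left _ (Set.Ici_subset_Ici.mpr
          (Nat.cast_le.mpr hab))) ⟨0, hfin _⟩
      rw [h0] at this
      simpa [Function.comp_def] using this
    have hev : ∀ᶠ n : ℕ in atTop, μ (Set.Ici (n : ℝ) ∩ 𝒵) < ENNReal.ofReal (α * c) :=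
      htend.eventually_lt_const (ENNReal.ofReal_pos.mpr hαc_pos)
    obtain ⟨n, hn⟩ := hev.exists
    refine ⟨(n : ℝ), ?_⟩
    have := ENNReal.toReal_mono ENNReal.ofReal_ne_top hn.le
    rwa [ENNReal.toReal_ofReal hαc_pos.le] at this
  -- S is bounded below : F tends to c at -∞
  have hBdd : BddBelow S := by
    have htend : Tendsto (fun n : ℕ => μ (Set.Ici (-(n : ℝ)) ∩ 𝒵)) atTop (𝓝 (μ 𝒵)) := by
      have hU : (⋃ n : ℕ, Set.Ici (-(n : ℝ)) ∩ 𝒵) = 𝒵 := by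
        ext x
        simp only [Set.mem_iUnion, Set.mem_inter_iff, Set.mem_Ici]
        constructor
        · rintro ⟨n, _, hx⟩; exact hx
        · intro hx
          obtain ⟨n, hn⟩ := exists_nat_gt (-x)
          exact ⟨n, by linarith, hx⟩
      have := tendsto_measure_iUnion_atTop (μ := μ)
        (s := fun n : ℕ => Set.Ici (-(n : ℝ)) ∩ 𝒵)
        (fun a b hab => Set.inter_subset_inter_left _ (Set.Ici_subset_Ici.mpr
          (neg_le_neg (Nat.cast_le.mpr hab))))
      rw [hU] at this
      exact this
    have hlt : ENNReal.ofReal (α * c) < μ 𝒵 := by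
      rw [← ENNReal.ofReal_toReal (hfin 𝒵), ← hc]
      exact ENNReal.ofReal_lt_ofReal_iff hcpos |>.mpr hαc_lt
    obtain ⟨n, hn⟩ := (htend.eventually_const_lt hlt).exists
    refine ⟨-(n : ℝ), fun s hs => ?_⟩
    by_contra hcon
    push_neg at hcon
    have h1 : F (-(n : ℝ)) ≤ F s := hanti hcon.le
    have h2 : α * c < F (-(n : ℝ)) := by
      have := ENNReal.toReal_mono (hfin _) hn.le
      rw [ENNReal.toReal_ofReal hαc_pos.le] at this
      rcases this.lt_or_eq with h | h
      · exact h
      · exfalso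
        have := ENNReal.ofReal_toReal (hfin (Set.Ici (-(n : ℝ)) ∩ 𝒵))
        rw [← h] at this
        exact absurd (this ▸ hn) (lt_irrefl _)
    have : α * c < F s := lt_of_lt_of_le h2 h1
    exact absurd hs (not_le.mpr this)
  set t0 : ℝ := sInf S with ht0
  -- F (t0 + ε) ≤ α * c for all ε > 0
  have hright : ∀ ε : ℝ, 0 < ε → F (t0 + ε) ≤ α * c := by
    intro ε hε
    have : sInf S < t0 + ε := by linarith [le_refl t0]
    obtain ⟨s, hsS, hs⟩ := (csInf_lt_iff hBdd hSne).mp this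
    exact le_trans (hanti hs.le) hsS
  -- F t0 ≤ α * c
  have hFle : F t0 ≤ α * c := by
    have hmono : Monotone (fun n : ℕ => Set.Ici (t0 + 1 / ((n : ℝ) + 1)) ∩ 𝒵) := by
      intro a b hab
      refine Set.inter_subset_inter_left _ (Set.Ici_subset_Ici.mpr ?_)
      have : 1 / ((b : ℝ) + 1) ≤ 1 / ((a : ℝ) + 1) := by
        apply one_div_le_one_div_of_le (by positivity)
        exact_mod_cast Nat.add_le_add_right hab 1
      linarith
    have hU : (⋃ n : ℕ, Set.Ici (t0 + 1 / ((n : ℝ) + 1)) ∩ 𝒵) = Set.Ioi t0 ∩ 𝒵 := by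
      ext x
      simp only [Set.mem_iUnion, Set.mem_inter_iff, Set.mem_Ici, Set.mem_Ioi]
      constructor
      · rintro ⟨n, h1, h2⟩
        have : (0:ℝ) < 1 / ((n : ℝ) + 1) := by positivity
        exact ⟨by linarith, h2⟩
      · rintro ⟨h1, h2⟩
        obtain ⟨n, hn⟩ := exists_nat_one_div_lt (sub_pos.mpr h1)
        exact ⟨n, by linarith, h2⟩
    have htend := tendsto_measure_iUnion_atTop (μ := μ) hmono
    rw [hU] at htend
    have hIoi : μ (Set.Ioi t0 ∩ 𝒵) = μ (Set.Ici t0 ∩ 𝒵) := by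
      apply le_antisymm
      · exact measure_mono (Set.inter_subset_inter_left _ Set.Ioi_subset_Ici_self)
      · have hsub : Set.Ici t0 ∩ 𝒵 ⊆ (Set.Ioi t0 ∩ 𝒵) ∪ {t0} := by
          rintro x ⟨hx1, hx2⟩
          rcases eq_or_lt_of_le (Set.mem_Ici.mp hx1) with h | h
          · exact Or.inr (by simp [← h])
          · exact Or.inl ⟨h, hx2⟩
        calc μ (Set.Ici t0 ∩ 𝒵) ≤ μ ((Set.Ioi t0 ∩ 𝒵) ∪ {t0}) := measure_mono hsub
          _ ≤ μ (Set.Ioi t0 ∩ 𝒵) + μ {t0} := measure_union_le _ _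
          _ = μ (Set.Ioi t0 ∩ 𝒵) := by rw [hatom t0, add_zero]
    rw [hIoi] at htend
    have hle : ∀ n : ℕ, μ (Set.Ici (t0 + 1 / ((n : ℝ) + 1)) ∩ 𝒵) ≤ ENNReal.ofReal (α * c) := by
      intro n
      rw [← ENNReal.ofReal_toReal (hfin _)]
      exact ENNReal.ofReal_le_ofReal (hright _ (by positivity))
    have hlim : μ (Set.Ici t0 ∩ 𝒵) ≤ ENNReal.ofReal (α * c) :=
      le_of_tendsto htend (Eventually.of_forall hle)
    have := ENNReal.toReal_mono ENNReal.ofReal_ne_top hlim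
    rwa [ENNReal.toReal_ofReal hαc_pos.le] at this
  -- α * c ≤ F t0
  have hFge : α * c ≤ F t0 := by
    have hleft : ∀ ε : ℝ, 0 < ε → α * c < F (t0 - ε) := by
      intro ε hε
      have hnot : t0 - ε ∉ S := fun h => absurd (csInf_le hBdd h) (by rw [← ht0]; linarith)
      exact not_le.mp hnot
    have hantiS : Antitone (fun n : ℕ => Set.Ici (t0 - 1 / ((n : ℝ) + 1)) ∩ 𝒵) := by
      intro a b hab
      refine Set.inter_subset_inter_left _ (Set.Ici_subset_Ici.mpr ?_)
      have : 1 / ((b : ℝ) + 1) ≤ 1 / ((a : ℝ) + 1) := by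
        apply one_div_le_one_div_of_le (by positivity)
        exact_mod_cast Nat.add_le_add_right hab 1
      linarith
    have hI : (⋂ n : ℕ, Set.Ici (t0 - 1 / ((n : ℝ) + 1)) ∩ 𝒵) = Set.Ici t0 ∩ 𝒵 := by
      ext x
      simp only [Set.mem_iInter, Set.mem_inter_iff, Set.mem_Ici]
      constructor
      · intro h
        have hx𝒵 : x ∈ 𝒵 := (h 0).2
        refine ⟨?_, hx𝒵⟩
        by_contra hcon
        push_neg at hcon
        obtain ⟨n, hn⟩ := exists_nat_one_div_lt (sub_pos.mpr hcon)
        have := (h n).1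
        linarith
      · rintro ⟨h1, h2⟩ n
        have : (0:ℝ) < 1 / ((n : ℝ) + 1) := by positivity
        exact ⟨by linarith, h2⟩
    have htend := tendsto_measure_iInter_atTop (μ := μ)
      (fun n : ℕ => (measurableSet_Ici.inter h𝒵).nullMeasurableSet) hantiS ⟨0, hfin _⟩
    rw [hI] at htend
    have hge : ∀ n : ℕ, ENNReal.ofReal (α * c) ≤ μ (Set.Ici (t0 - 1 / ((n : ℝ) + 1)) ∩ 𝒵) := by
      intro n
      rw [← ENNReal.ofReal_toReal (hfin (Set.Ici (t0 - 1 / ((n : ℝ) + 1)) ∩ 𝒵))]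
      exact ENNReal.ofReal_le_ofReal (hleft _ (by positivity)).le
    have hlim : ENNReal.ofReal (α * c) ≤ μ (Set.Ici t0 ∩ 𝒵) :=
      ge_of_tendsto htend (Eventually.of_forall hge)
    have := ENNReal.toReal_mono (hfin _) hlim
    rwa [ENNReal.toReal_ofReal hαc_pos.le] at this
  have hFt0 : F t0 = α * c := le_antisymm hFle hFge
  -- S = Ici t0
  have hSIci : ∀ t : ℝ, (F t ≤ α * c ↔ t0 ≤ t) := by
    intro t
    constructor
    · intro h
      exact csInf_le hBdd h
    · intro h
      calc F t ≤ F t0 := hanti h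
        _ = α * c := hFt0
  -- rewrite the event
  have hset : {ω | p (Z ω) ≤ α ∧ Z ω ∈ 𝒵} = {ω | t0 ≤ Z ω ∧ Z ω ∈ 𝒵} := by
    ext ω
    simp only [Set.mem_setOf_eq]
    rw [hpiff (Z ω), hSIci (Z ω)]
  rw [hset, hmapIci t0, hmapZ]
  -- conclude via toReal equality
  have hne1 : μ (Set.Ici t0 ∩ 𝒵) ≠ ∞ := hfin _
  have hne2 : ENNReal.ofReal α * μ 𝒵 ≠ ∞ :=
    ENNReal.mul_ne_top ENNReal.ofReal_ne_top (hfin 𝒵)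
  rw [← ENNReal.ofReal_toReal hne1, ← ENNReal.ofReal_toReal hne2]
  congr 1
  rw [ENNReal.toReal_mul, ENNReal.toReal_ofReal hα0.le]
  exact hFt0
end

section
/- Let Z be a real-valued random variable with law the Gaussian measure N(m, v) on ℝ, v > 0, and let (𝒵_i)_{i ∈ I} be a countable measurable partition of ℝ such that P(Z ∈ 𝒵_i) > 0 for every i. Define p : ℝ → ℝ by p(t) := P(Z ≥ t and Z ∈ 𝒵_i) / P(Z ∈ 𝒵_i) for t ∈ 𝒵_i. Then for every α ∈ (0, 1), P(p(Z) ≤ α) = α. -/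
open MeasureTheory ProbabilityTheory Filter Topology
open scoped NNReal ENNReal

lemma cont_aux (ν : Measure ℝ) [IsFiniteMeasure ν] (hν : ∀ x : ℝ, ν {x} = 0) :
    Continuous fun t => (ν (Set.Ici t)).toReal := by
  have hfin : ∀ s : Set ℝ, ν s ≠ ∞ := fun s => (measure_lt_top ν s).ne
  have hdiff : ∀ s u : ℝ, s ≤ u →
      (ν (Set.Ici s)).toReal - (ν (Set.Ici u)).toReal = (ν (Set.Ico s u)).toReal := by
    intro s u hsu
    have hU : Set.Ico s u ∪ Set.Ici u = Set.Ici s := Set.Ico_union_Ici_eq_Ici hsu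
    have hd : Disjoint (Set.Ico s u) (Set.Ici u) := by
      apply Set.disjoint_left.2
      rintro x ⟨_, hx2⟩ hx3
      exact absurd hx3 (not_le.2 hx2)
    have hadd := measure_union (μ := ν) hd measurableSet_Ici
    rw [hU] at hadd
    rw [hadd, ENNReal.toReal_add (hfin _) (hfin _)]
    ring
  rw [Metric.continuous_iff]
  intro a ε hε
  have htend : Tendsto (fun n : ℕ => ν (Set.Icc (a - 1/((n:ℝ)+1)) (a + 1/((n:ℝ)+1))))
      atTop (𝓝 (ν {a})) := by
    have h1 : (⋂ n : ℕ, Set.Icc (a - 1/((n:ℝ)+1)) (a + 1/((n:ℝ)+1))) = {a} := by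
      ext x
      simp only [Set.mem_iInter, Set.mem_Icc, Set.mem_singleton_iff]
      constructor
      · intro h
        by_contra hne
        have hxa : 0 < |x - a| := abs_pos.2 (sub_ne_zero.2 hne)
        obtain ⟨n, hn⟩ := exists_nat_one_div_lt hxa
        have habs : |x - a| ≤ 1/((n:ℝ)+1) :=
          abs_le.2 ⟨by linarith [(h n).1], by linarith [(h n).2]⟩
        linarith
      · rintro rfl
        intro n
        have hp : (0:ℝ) < 1/((n:ℝ)+1) := by positivity
        constructor <;> linarith
    have hanti2 : Antitone (fun n : ℕ => Set.Icc (a - 1/((n:ℝ)+1)) (a + 1/((n:ℝ)+1))) := by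
      intro n k hnk
      have h2 : (1:ℝ)/((k:ℝ)+1) ≤ 1/((n:ℝ)+1) := by
        apply one_div_le_one_div_of_le
        · positivity
        · have : (n:ℝ) ≤ (k:ℝ) := Nat.cast_le.2 hnk
          linarith
      exact Set.Icc_subset_Icc (by linarith) (by linarith)
    have h2 := tendsto_measure_iInter_atTop (μ := ν)
      (s := fun n : ℕ => Set.Icc (a - 1/((n:ℝ)+1)) (a + 1/((n:ℝ)+1)))
      (fun n => measurableSet_Icc.nullMeasurableSet) hanti2 ⟨0, hfin _⟩
    rwa [h1] at h2
  rw [hν a] at htend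
  have hev : ∀ᶠ n : ℕ in atTop,
      ν (Set.Icc (a - 1/((n:ℝ)+1)) (a + 1/((n:ℝ)+1))) < ENNReal.ofReal ε :=
    htend.eventually_lt_const (by simp [hε])
  obtain ⟨n, hn⟩ := hev.exists
  have hp1 : (0:ℝ) < 1/((n:ℝ)+1) := by positivity
  refine ⟨1/((n:ℝ)+1), hp1, fun t ht => ?_⟩
  have hb : (ν (Set.Icc (a - 1/((n:ℝ)+1)) (a + 1/((n:ℝ)+1)))).toReal < ε :=
    ENNReal.toReal_lt_of_lt_ofReal hn
  have hbound : ∀ s u : ℝ, a - 1/((n:ℝ)+1) ≤ s → u ≤ a + 1/((n:ℝ)+1) →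
      (ν (Set.Ico s u)).toReal < ε := by
    intro s u h1 h2
    refine lt_of_le_of_lt ?_ hb
    exact ENNReal.toReal_mono (hfin _)
      (measure_mono (fun x hx => ⟨by linarith [hx.1], by linarith [le_of_lt hx.2]⟩))
  rw [Real.dist_eq] at ht ⊢
  have ht' := abs_lt.1 ht
  rcases le_total t a with h | h
  · have h0 : (ν (Set.Ico t a)).toReal < ε := hbound t a (by linarith [ht'.1]) (by linarith)
    have hd := hdiff t a h
    have hnn : (0:ℝ) ≤ (ν (Set.Ico t a)).toReal := ENNReal.toReal_nonneg
    rw [abs_of_nonneg (by linarith)]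
    linarith
  · have h0 : (ν (Set.Ico a t)).toReal < ε := hbound a t (by linarith) (by linarith [ht'.2])
    have hd := hdiff a t h
    have hnn : (0:ℝ) ≤ (ν (Set.Ico a t)).toReal := ENNReal.toReal_nonneg
    rw [abs_of_nonpos (by linarith)]
    linarith

/-- Marginal validity of the selective p-value for a Gaussian test statistic over a
countable measurable partition of selection regions: `P(p(Z) ≤ α) = α`. -/
theorem stmt_3 {Ω : Type*} [MeasurableSpace Ω] (P : Measure Ω) [IsProbabilityMeasure P]
    (Z : Ω → ℝ) (hZ : Measurable Z)
    (m : ℝ) (v : ℝ≥0) (hv : 0 < v)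
    (hlaw : P.map Z = gaussianReal m v)
    {I : Type*} [Countable I] (𝒵 : I → Set ℝ)
    (hmeas : ∀ i, MeasurableSet (𝒵 i))
    (hdisj : Pairwise (Function.onFun Disjoint 𝒵))
    (hcover : ⋃ i, 𝒵 i = Set.univ)
    (hpos : ∀ i, 0 < P {ω | Z ω ∈ 𝒵 i})
    (p : ℝ → ℝ)
    (hp : ∀ i, ∀ t ∈ 𝒵 i,
      p t = (P {ω | t ≤ Z ω ∧ Z ω ∈ 𝒵 i}).toReal / (P {ω | Z ω ∈ 𝒵 i}).toReal)
    (α : ℝ) (hα : α ∈ Set.Ioo (0 : ℝ) 1) :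
    P {ω | p (Z ω) ≤ α} = ENNReal.ofReal α := by
  obtain ⟨hα0, hα1⟩ := hα
  set μ : Measure ℝ := gaussianReal m v with hμ
  have hvne : v ≠ 0 := hv.ne'
  haveI : IsProbabilityMeasure μ := by rw [hμ]; infer_instance
  have hatom : ∀ x : ℝ, μ {x} = 0 := fun x => by
    rw [hμ, gaussianReal_of_var_ne_zero _ hvne]
    exact (withDensity_absolutelyContinuous _ _) (measure_singleton x)
  have hmap : ∀ s : Set ℝ, MeasurableSet s → P (Z ⁻¹' s) = μ s := fun s hs => by
    rw [← hlaw, Measure.map_apply hZ hs]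
  have hfin : ∀ s : Set ℝ, μ s ≠ ∞ := fun s => (measure_lt_top μ s).ne
  set c : I → ℝ := fun i => (μ (𝒵 i)).toReal with hc
  have hcpos : ∀ i, 0 < c i := fun i => by
    have h := hpos i
    rw [show {ω | Z ω ∈ 𝒵 i} = Z ⁻¹' 𝒵 i from rfl, hmap _ (hmeas i)] at h
    exact ENNReal.toReal_pos h.ne' (hfin _)
  set f : I → ℝ → ℝ := fun i t => (μ (Set.Ici t ∩ 𝒵 i)).toReal with hf
  have hrestrict : ∀ i t, μ (Set.Ici t ∩ 𝒵 i) = (μ.restrict (𝒵 i)) (Set.Ici t) :=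
    fun i t => (Measure.restrict_apply measurableSet_Ici).symm
  have hcont : ∀ i, Continuous (f i) := fun i => by
    have hA : ∀ x : ℝ, (μ.restrict (𝒵 i)) {x} = 0 := fun x =>
      le_antisymm (le_trans (Measure.restrict_apply_le _ _) (hatom x).le) zero_le
    simpa only [hf, hrestrict] using cont_aux (μ.restrict (𝒵 i)) hA
  have hanti : ∀ i, Antitone (f i) := fun i s t hst =>
    ENNReal.toReal_mono (hfin _)
      (measure_mono (Set.inter_subset_inter_left _ (Set.Ici_subset_Ici.2 hst)))
  have hpf : ∀ i, ∀ t ∈ 𝒵 i, (p t ≤ α ↔ f i t ≤ α * c i) := by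
    intro i t ht
    rw [hp i t ht]
    have h1 : {ω | t ≤ Z ω ∧ Z ω ∈ 𝒵 i} = Z ⁻¹' (Set.Ici t ∩ 𝒵 i) := rfl
    have h2 : {ω | Z ω ∈ 𝒵 i} = Z ⁻¹' (𝒵 i) := rfl
    rw [h1, h2, hmap _ (measurableSet_Ici.inter (hmeas i)), hmap _ (hmeas i)]
    rw [div_le_iff₀ (hcpos i)]
  have key : ∀ i, ∃ s : ℝ, ({t | p t ≤ α} ∩ 𝒵 i = Set.Ici s ∩ 𝒵 i) ∧
      μ (Set.Ici s ∩ 𝒵 i) = ENNReal.ofReal α * μ (𝒵 i) := by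
    intro i
    set S : Set ℝ := {t | f i t ≤ α * c i} with hS
    have hub : ∃ b : ℝ, f i b < α * c i := by
      have htop : Tendsto (fun n : ℕ => μ (Set.Ici (n:ℝ) ∩ 𝒵 i)) atTop
          (𝓝 (μ (⋂ n : ℕ, Set.Ici (n:ℝ) ∩ 𝒵 i))) :=
        tendsto_measure_iInter_atTop
          (fun n => (measurableSet_Ici.inter (hmeas i)).nullMeasurableSet)
          (fun n k hnk => Set.inter_subset_inter_left _
            (Set.Ici_subset_Ici.2 (Nat.cast_le.2 hnk)))
          ⟨0, hfin _⟩
      have hempty : (⋂ n : ℕ, Set.Ici (n:ℝ) ∩ 𝒵 i) = ∅ := by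
        ext x
        simp only [Set.mem_iInter, Set.mem_inter_iff, Set.mem_Ici,
          Set.mem_empty_iff_false, iff_false]
        intro h
        obtain ⟨n, hn⟩ := exists_nat_gt x
        exact absurd (h n).1 (not_le.2 hn)
      rw [hempty, measure_empty] at htop
      have h0 : Tendsto (fun n : ℕ => f i (n:ℝ)) atTop (𝓝 0) := by
        have := (ENNReal.tendsto_toReal (a := 0) (by simp)).comp htop
        simpa [hf, Function.comp_def] using this
      have hlt : (0:ℝ) < α * c i := mul_pos hα0 (hcpos i)
      obtain ⟨n, hn⟩ := (h0.eventually_lt_const hlt).exists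
      exact ⟨(n:ℝ), hn⟩
    have hlb : ∃ a0 : ℝ, α * c i < f i a0 := by
      have hbot : Tendsto (fun n : ℕ => μ (Set.Ici (-(n:ℝ)) ∩ 𝒵 i)) atTop
          (𝓝 (μ (⋃ n : ℕ, Set.Ici (-(n:ℝ)) ∩ 𝒵 i))) :=
        tendsto_measure_iUnion_atTop
          (fun n k hnk => Set.inter_subset_inter_left _
            (Set.Ici_subset_Ici.2 (by
              have : (n:ℝ) ≤ (k:ℝ) := Nat.cast_le.2 hnk
              linarith)))
      have huniv : (⋃ n : ℕ, Set.Ici (-(n:ℝ)) ∩ 𝒵 i) = 𝒵 i := by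
        ext x
        simp only [Set.mem_iUnion, Set.mem_inter_iff, Set.mem_Ici]
        constructor
        · rintro ⟨n, _, h⟩; exact h
        · intro h
          obtain ⟨n, hn⟩ := exists_nat_gt (-x)
          exact ⟨n, by linarith, h⟩
      rw [huniv] at hbot
      have h0 : Tendsto (fun n : ℕ => f i (-(n:ℝ))) atTop (𝓝 (c i)) := by
        have := (ENNReal.tendsto_toReal (hfin (𝒵 i))).comp hbot
        simpa [hf, hc, Function.comp_def] using this
      have hlt : α * c i < c i := by nlinarith [hcpos i]
      obtain ⟨n, hn⟩ := (h0.eventually_const_lt hlt).exists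
      exact ⟨-(n:ℝ), hn⟩
    obtain ⟨b, hb⟩ := hub
    obtain ⟨a0, ha0⟩ := hlb
    have hSne : S.Nonempty := ⟨b, hb.le⟩
    have hSbd : BddBelow S := by
      refine ⟨a0, fun t ht => ?_⟩
      by_contra hcon
      push_neg at hcon
      have := hanti i hcon.le
      have ht' : f i t ≤ α * c i := ht
      linarith
    have hSclosed : IsClosed S := IsClosed.preimage (hcont i) isClosed_Iic
    set s := sInf S with hs
    have hsmem : s ∈ S := hSclosed.csInf_mem hSne hSbd
    have hSIci : S = Set.Ici s := by
      ext t
      constructor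
      · exact fun ht => csInf_le hSbd ht
      · intro ht
        exact le_trans (hanti i ht) hsmem
    have hfs : f i s = α * c i := by
      refine le_antisymm hsmem ?_
      have hseq : Tendsto (fun k : ℕ => s - 1/((k:ℝ)+1)) atTop (𝓝 s) := by
        have h1 : Tendsto (fun k : ℕ => 1/((k:ℝ)+1)) atTop (𝓝 0) :=
          tendsto_one_div_add_atTop_nhds_zero_nat
        have h2 := h1.const_sub s
        simpa using h2
      have hT : Tendsto (fun k : ℕ => f i (s - 1/((k:ℝ)+1))) atTop (𝓝 (f i s)) :=
        ((hcont i).continuousAt).tendsto.comp hseq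
      refine ge_of_tendsto hT (Filter.Eventually.of_forall fun k => ?_)
      by_contra hcon
      push_neg at hcon
      have hmem : s - 1/((k:ℝ)+1) ∈ S := hcon.le
      have hle := csInf_le hSbd hmem
      have hpk : (0:ℝ) < 1/((k:ℝ)+1) := by positivity
      rw [← hs] at hle
      linarith
    refine ⟨s, ?_, ?_⟩
    · ext t
      simp only [Set.mem_inter_iff, Set.mem_setOf_eq, Set.mem_Ici]
      constructor
      · rintro ⟨hpt, ht⟩
        refine ⟨?_, ht⟩
        have hmem : t ∈ S := (hpf i t ht).1 hpt
        rwa [hSIci] at hmem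
      · rintro ⟨hts, ht⟩
        have hmem : t ∈ S := by rw [hSIci]; exact hts
        exact ⟨(hpf i t ht).2 hmem, ht⟩
    · have h1 : μ (Set.Ici s ∩ 𝒵 i) = ENNReal.ofReal (f i s) :=
        (ENNReal.ofReal_toReal (hfin _)).symm
      rw [h1, hfs, ENNReal.ofReal_mul hα0.le, hc, ENNReal.ofReal_toReal (hfin _)]
  choose s hsEq hsμ using key
  have hset : {t | p t ≤ α} = ⋃ i, Set.Ici (s i) ∩ 𝒵 i := by
    ext t
    have ht : t ∈ ⋃ i, 𝒵 i := by rw [hcover]; exact Set.mem_univ t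
    obtain ⟨i, hi⟩ := Set.mem_iUnion.1 ht
    simp only [Set.mem_setOf_eq, Set.mem_iUnion]
    constructor
    · intro hpt
      refine ⟨i, ?_⟩
      rw [← hsEq i]
      exact ⟨hpt, hi⟩
    · rintro ⟨j, hj⟩
      have hmem : t ∈ {t | p t ≤ α} ∩ 𝒵 j := by rw [hsEq j]; exact hj
      exact hmem.1
  have hmeasU : ∀ i, MeasurableSet (Set.Ici (s i) ∩ 𝒵 i) := fun i =>
    measurableSet_Ici.inter (hmeas i)
  have hdisjU : Pairwise (Function.onFun Disjoint fun i => Set.Ici (s i) ∩ 𝒵 i) :=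
    fun i j hij => (hdisj hij).mono Set.inter_subset_right Set.inter_subset_right
  have hPeq : P {ω | p (Z ω) ≤ α} = μ {t | p t ≤ α} := by
    have h1 : {ω | p (Z ω) ≤ α} = Z ⁻¹' {t | p t ≤ α} := rfl
    rw [h1, hmap _ (by rw [hset]; exact MeasurableSet.iUnion hmeasU)]
  rw [hPeq, hset, measure_iUnion hdisjU hmeasU]
  simp_rw [hsμ]
  rw [ENNReal.tsum_mul_left, ← measure_iUnion hdisj (fun i => hmeas i), hcover,
    measure_univ, mul_one]
end
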